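/- Let d ≥ 3, G = Isom(ℝ^d), and let μ be a Borel probability measure on G with ∫_G v(g) dμ(g) = 0 and C := ∫_G |v(g)|² dμ(g) < ∞. Then for every x ∈ ℝ^d, ‖T_x 1 − 1‖₂ ≤ 4π² C |x|², where 1 denotes the constant function 1 on SO(d); consequently ‖T_x² 1 − 1‖₂ ≤ 8π² C |x|². -/

import Mathlib

open MeasureTheory Matrix NNReal ENNReal Filter Topology

noncomputable section

/-- The special orthogonal group `SO(d)`, realized as the group of `d × d` real orthogonal
matrices of determinant one. -/
abbrev SOd (d : ℕ) : Type := ↥(Matrix.specialOrthogonalGroup (Fin d) ℝ)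

/-- Euclidean space `ℝ^d`. -/
abbrev Ed (d : ℕ) : Type := EuclideanSpace ℝ (Fin d)

instance (d : ℕ) : Group (SOd d) :=
  { (inferInstance : Monoid (SOd d)) with
    inv := fun A => ⟨star A.1, by
      obtain ⟨A, hA⟩ := A
      rw [Matrix.mem_specialOrthogonalGroup_iff] at hA ⊢
      refine ⟨Unitary.star_mem hA.1, ?_⟩
      rw [Matrix.star_eq_conjTranspose, Matrix.det_conjTranspose, hA.2]
      simp⟩
    inv_mul_cancel := fun A => Subtype.ext A.2.1.1 }

/-- The natural (linear, isometric) action of `SO(d)` on `ℝ^d` by matrix-vector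
multiplication. -/
def SOd.act {d : ℕ} (θ : SOd d) (x : Ed d) : Ed d := WithLp.toLp 2 (θ.1.mulVec (WithLp.ofLp x))

theorem SOd.act_add {d : ℕ} (θ : SOd d) (x y : Ed d) :
    θ.act (x + y) = θ.act x + θ.act y := by
  simp [SOd.act, Matrix.mulVec_add]

theorem SOd.act_mul {d : ℕ} (θ₁ θ₂ : SOd d) (x : Ed d) :
    (θ₁ * θ₂).act x = θ₁.act (θ₂.act x) := by
  simp [SOd.act, Matrix.mulVec_mulVec]

theorem SOd.one_act {d : ℕ} (x : Ed d) : (1 : SOd d).act x = x := by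
  simp [SOd.act]

theorem SOd.act_zero {d : ℕ} (θ : SOd d) : θ.act 0 = 0 := by
  simp [SOd.act]

instance (d : ℕ) : MeasurableSpace (SOd d) := borel _
instance (d : ℕ) : BorelSpace (SOd d) := ⟨rfl⟩

/-- The group `Isom(ℝ^d) = ℝ^d ⋊ SO(d)` of orientation-preserving isometries of `ℝ^d`,
where `(v₁,θ₁)·(v₂,θ₂) = (v₁ + θ₁ v₂, θ₁ θ₂)`. -/
def IsomRd (d : ℕ) : Type := Ed d × SOd d

namespace IsomRd

variable {d : ℕ}

/-- The translation part `v(g)` of an isometry `g = (v(g), θ(g))`. -/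
def v (g : IsomRd d) : Ed d := g.1

/-- The rotation part `θ(g)` of an isometry `g = (v(g), θ(g))`; i.e. the quotient
homomorphism `θ : Isom(ℝ^d) → SO(d)`. -/
def rot (g : IsomRd d) : SOd d := g.2

instance : One (IsomRd d) := ⟨((0 : Ed d), (1 : SOd d))⟩
instance : Mul (IsomRd d) := ⟨fun g h => (g.1 + g.2.act h.1, g.2 * h.2)⟩
instance : Inv (IsomRd d) := ⟨fun g => (-(g.2⁻¹.act g.1), g.2⁻¹)⟩

instance : Group (IsomRd d) where
  mul_assoc g h k := by
    show (_, _) = (_, _)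
    rw [Prod.mk.injEq]
    constructor
    · show g.1 + g.2.act h.1 + (g.2 * h.2).act k.1 = g.1 + g.2.act (h.1 + h.2.act k.1)
      rw [SOd.act_add, SOd.act_mul, add_assoc]
    · exact mul_assoc _ _ _
  one_mul g := by
    show ((0 : Ed d) + (1 : SOd d).act g.1, 1 * g.2) = g
    rw [SOd.one_act, zero_add, one_mul]
    rfl
  mul_one g := by
    show (g.1 + g.2.act 0, g.2 * 1) = g
    rw [SOd.act_zero, add_zero, mul_one]
    rfl
  inv_mul_cancel g := by
    show (-(g.2⁻¹.act g.1) + g.2⁻¹.act g.1, g.2⁻¹ * g.2) = ((0 : Ed d), (1 : SOd d))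
    rw [neg_add_cancel, inv_mul_cancel]

instance : TopologicalSpace (IsomRd d) := inferInstanceAs (TopologicalSpace (Ed d × SOd d))
instance : MeasurableSpace (IsomRd d) := borel _
instance : BorelSpace (IsomRd d) := ⟨rfl⟩

/-- The natural isometric action of `Isom(ℝ^d)` on `ℝ^d`: `g(x) = v(g) + θ(g)x`. -/
def isomAct (g : IsomRd d) (x : Ed d) : Ed d := g.v + g.rot.act x

end IsomRd

/-- `e(y) = e^{-2πiy}`. -/
def eChar (y : ℝ) : ℂ := Complex.exp (-(2 * Real.pi * y) * Complex.I)

/-- The unitary representation `π_x : Isom(ℝ^d) → U(L²(SO(d)))` given by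
`(π_x(g)φ)(ω) = e(⟨ωx, v(g)⟩)·φ(θ(g)⁻¹ω)`, applied to a function `φ` on `SO(d)`. -/
def piRep {d : ℕ} (x : Ed d) (g : IsomRd d) (φ : SOd d → ℂ) : SOd d → ℂ :=
  fun ω => eChar (inner ℝ (SOd.act ω x) (IsomRd.v g) : ℝ) * φ ((IsomRd.rot g)⁻¹ * ω)

/-- The averaging operator `T_x = π_x(μ) = ∫_G π_x(g) dμ(g)` on `L²(SO(d))`, i.e.
`(T_x φ)(ω) = ∫_G e(⟨ωx, v(g)⟩)·φ(θ(g)⁻¹ω) dμ(g)`. -/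
def Tav {d : ℕ} (μ : Measure (IsomRd d)) (x : Ed d) (φ : SOd d → ℂ) : SOd d → ℂ :=
  fun ω => ∫ g, piRep x g φ ω ∂μ

/-- The operator norm `‖T_x‖` of `T_x = π_x(μ)` on `L²(SO(d), mSO)`, as the supremum of
`‖T_x φ‖₂` over unit vectors `φ ∈ L²(SO(d))`. -/
def TavNorm {d : ℕ} (μ : Measure (IsomRd d)) (mSO : Measure (SOd d)) (x : Ed d) : ℝ≥0∞ :=
  ⨆ (φ : SOd d → ℂ) (_ : MemLp φ 2 mSO ∧ eLpNorm φ 2 mSO = 1), eLpNorm (Tav μ x φ) 2 mSO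

/-- A measure `μ` on a group is symmetric if it is invariant under `g ↦ g⁻¹`. -/
def MeasureIsSymmetric {G : Type} [Group G] [MeasurableSpace G] (μ : Measure G) : Prop :=
  Measure.map (fun g => g⁻¹) μ = μ

/-! ### Auxiliary lemmas -/

section Aux
open Matrix MeasureTheory

lemma hasDeriv_expI (s : ℝ) : HasDerivAt (fun u : ℝ => Complex.exp (u * Complex.I))
    (Complex.I * Complex.exp (s * Complex.I)) s := by
  have h : HasDerivAt (fun z : ℂ => Complex.exp (z * Complex.I))
      (Complex.exp ((s:ℂ) * Complex.I) * Complex.I) (s : ℂ) := by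
    simpa using ((hasDerivAt_id (s:ℂ)).mul_const Complex.I).cexp
  simpa [mul_comm] using h.comp_ofReal

lemma norm_expI_sub_one_le (t : ℝ) : ‖Complex.exp (t * Complex.I) - 1‖ ≤ |t| := by
  have := Convex.norm_image_sub_le_of_norm_hasDerivWithin_le
    (f := fun u : ℝ => Complex.exp (u * Complex.I))
    (f' := fun u : ℝ => Complex.I * Complex.exp (u * Complex.I)) (C := 1)
    (s := Set.univ) (fun u _ => (hasDeriv_expI u).hasDerivWithinAt)
    (fun u _ => by simp [Complex.norm_exp]) convex_univ (Set.mem_univ 0) (Set.mem_univ t)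
  simpa using this

lemma norm_expI_sub_one_sub_le (t : ℝ) :
    ‖Complex.exp (t * Complex.I) - 1 - t * Complex.I‖ ≤ t ^ 2 := by
  have hder : ∀ u : ℝ, HasDerivAt (fun u : ℝ => Complex.exp (u * Complex.I) - u * Complex.I)
      (Complex.I * Complex.exp (u * Complex.I) - Complex.I) u := fun u => by
    have h := (hasDeriv_expI u).sub (((hasDerivAt_id u).ofReal_comp).mul_const Complex.I)
    simp only [id, Complex.ofReal_one, one_mul] at h
    exact h
  have key := Convex.norm_image_sub_le_of_norm_hasDerivWithin_le
    (f := fun u : ℝ => Complex.exp (u * Complex.I) - u * Complex.I)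
    (f' := fun u : ℝ => Complex.I * Complex.exp (u * Complex.I) - Complex.I) (C := |t|)
    (s := Set.uIcc 0 t) (fun u _ => (hder u).hasDerivWithinAt)
    (fun u hu => by
      show ‖Complex.I * Complex.exp (u * Complex.I) - Complex.I‖ ≤ |t|
      have h1 : Complex.I * Complex.exp (u * Complex.I) - Complex.I
          = Complex.I * (Complex.exp (u * Complex.I) - 1) := by ring
      rw [h1, norm_mul, Complex.norm_I, one_mul]
      refine (norm_expI_sub_one_le u).trans ?_
      rcases Set.mem_uIcc.1 hu with ⟨h1, h2⟩ | ⟨h1, h2⟩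
      · rw [_root_.abs_of_nonneg h1]; exact (h2.trans (le_abs_self t))
      · rw [_root_.abs_of_nonpos h2]; exact (neg_le_neg h1).trans (neg_le_abs t))
    (convex_uIcc 0 t) Set.left_mem_uIcc Set.right_mem_uIcc
  simp only [Complex.ofReal_zero, zero_mul, Complex.exp_zero, sub_zero, Real.norm_eq_abs] at key
  calc ‖Complex.exp (t * Complex.I) - 1 - t * Complex.I‖
      = ‖Complex.exp (↑t * Complex.I) - ↑t * Complex.I - 1‖ := by ring_nf
    _ ≤ |t| * |t| := key
    _ = t ^ 2 := by rw [← abs_mul, ← sq]; exact abs_sq t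

lemma norm_eChar (y : ℝ) : ‖eChar y‖ = 1 := by
  unfold eChar
  rw [Complex.norm_exp]
  norm_num

lemma norm_eChar_sub_one_add_le (y : ℝ) :
    ‖eChar y - 1 + ((2 * Real.pi * y : ℝ) : ℂ) * Complex.I‖ ≤ (2 * Real.pi * y) ^ 2 := by
  have h := norm_expI_sub_one_sub_le (-(2 * Real.pi * y))
  have he : eChar y = Complex.exp (((-(2 * Real.pi * y) : ℝ) : ℂ) * Complex.I) := by
    unfold eChar; push_cast; ring_nf
  have heq : eChar y - 1 + ((2 * Real.pi * y : ℝ) : ℂ) * Complex.I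
      = Complex.exp (((-(2 * Real.pi * y) : ℝ) : ℂ) * Complex.I) - 1
        - ((-(2 * Real.pi * y) : ℝ) : ℂ) * Complex.I := by
    rw [he]; push_cast; ring
  rw [heq]
  simpa [neg_sq] using h

lemma SOd.norm_act' {d : ℕ} (θ : SOd d) (y : Ed d) : ‖θ.act y‖ = ‖y‖ := by
  have hst : star θ.1 * θ.1 = 1 := θ.2.1.1
  rw [Matrix.star_eq_conjTranspose, Matrix.conjTranspose_eq_transpose_of_trivial] at hst
  have h : (inner ℝ (θ.act y) (θ.act y) : ℝ) = inner ℝ y y := by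
    simp only [SOd.act, PiLp.inner_apply, RCLike.inner_apply, conj_trivial, PiLp.toLp_apply]
    have hdp : ∀ z w : Fin d → ℝ, (∑ i, z i * w i) = dotProduct z w := fun _ _ => rfl
    rw [hdp, hdp, Matrix.dotProduct_mulVec]
    have hv : Matrix.vecMul (θ.1.mulVec (WithLp.ofLp y)) θ.1 = (Matrix.transpose θ.1 * θ.1).mulVec (WithLp.ofLp y) := by
      rw [← Matrix.mulVec_transpose, Matrix.mulVec_mulVec]
    rw [hv, hst, Matrix.one_mulVec]
  have h2 : ‖θ.act y‖ ^ 2 = ‖y‖ ^ 2 := by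
    rw [← real_inner_self_eq_norm_sq, ← real_inner_self_eq_norm_sq, h]
  nlinarith [norm_nonneg (θ.act y), norm_nonneg y]

variable {d : ℕ}

instance matSC : SecondCountableTopology (Matrix (Fin d) (Fin d) ℝ) :=
  inferInstanceAs (SecondCountableTopology (Fin d → Fin d → ℝ))

instance sodSC : SecondCountableTopology (SOd d) :=
  TopologicalSpace.secondCountableTopology_induced _ _ Subtype.val

instance isomSC : SecondCountableTopology (IsomRd d) :=
  inferInstanceAs (SecondCountableTopology (Ed d × SOd d))

lemma continuous_act_const (x : Ed d) : Continuous fun θ : SOd d => θ.act x := by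
  have h : Continuous fun θ : SOd d => (θ.1.mulVec (WithLp.ofLp x) : Fin d → ℝ) := by
    apply continuous_pi
    intro i
    simp only [Matrix.mulVec, dotProduct]
    apply continuous_finset_sum
    intro j _
    exact (continuous_subtype_val.matrix_elem i j).mul
      continuous_const
  exact (PiLp.continuous_toLp 2 (fun _ : Fin d => ℝ)).comp h

lemma continuous_inv_SOd : Continuous fun θ : SOd d => θ⁻¹ := by
  apply continuous_induced_rng.mpr
  exact continuous_star.comp continuous_subtype_val

lemma continuous_mul_const_SOd (ω : SOd d) : Continuous fun θ : SOd d => θ * ω := by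
  apply continuous_induced_rng.mpr
  show Continuous fun θ : SOd d => (θ : Matrix (Fin d) (Fin d) ℝ) * (ω : Matrix (Fin d) (Fin d) ℝ)
  exact continuous_subtype_val.matrix_mul continuous_const

lemma continuous_v : Continuous (IsomRd.v (d := d)) := continuous_fst

lemma continuous_rot : Continuous (IsomRd.rot (d := d)) := continuous_snd

lemma continuous_eChar : Continuous eChar := by
  unfold eChar
  fun_prop

end Aux

/-- **Action of `T_x` on the constant function `1`.**
Let `d ≥ 3`, `G = Isom(ℝ^d)` and let `μ` be a Borel probability measure on `G` with
`∫_G v(g) dμ(g) = 0` and `C := ∫_G |v(g)|² dμ(g) < ∞`.  Then `‖T_x 1 - 1‖₂ ≤ 4π² C |x|²`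
for every `x ∈ ℝ^d`, and consequently `‖T_x² 1 - 1‖₂ ≤ 8π² C |x|²`. -/
theorem Tav_one_estimate
    (d : ℕ) (hd : 3 ≤ d)
    (mSO : Measure (SOd d)) [mSO.IsHaarMeasure] [IsProbabilityMeasure mSO]
    (μ : Measure (IsomRd d)) [IsProbabilityMeasure μ]
    (hmean : (∫ g, IsomRd.v g ∂μ) = 0)
    (hC : Integrable (fun g => ‖IsomRd.v g‖ ^ 2) μ)
    (x : Ed d) :
    eLpNorm (fun ω => Tav μ x (fun _ => 1) ω - 1) 2 mSO ≤
      ENNReal.ofReal (4 * Real.pi ^ 2 * (∫ g, ‖IsomRd.v g‖ ^ 2 ∂μ) * ‖x‖ ^ 2) ∧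
    eLpNorm (fun ω => Tav μ x (Tav μ x (fun _ => 1)) ω - 1) 2 mSO ≤
      ENNReal.ofReal (8 * Real.pi ^ 2 * (∫ g, ‖IsomRd.v g‖ ^ 2 ∂μ) * ‖x‖ ^ 2) := by
  classical
  set C : ℝ := ∫ g, ‖IsomRd.v g‖ ^ 2 ∂μ with hCdef
  have hC0 : 0 ≤ C := integral_nonneg fun g => by positivity
  set B : ℝ := 4 * Real.pi ^ 2 * C * ‖x‖ ^ 2 with hBdef
  have hB0 : 0 ≤ B := by positivity
  -- integrability of the translation part
  have hv_int : Integrable (IsomRd.v (d := d)) μ := by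
    refine Integrable.mono' ((integrable_const 1).add hC)
      continuous_v.aestronglyMeasurable (ae_of_all _ fun g => ?_)
    have h0 := norm_nonneg (IsomRd.v g)
    simp only [Pi.add_apply]
    nlinarith
  -- `Tav` applied to the constant function 1
  have hTav1 : ∀ ω : SOd d, Tav μ x (fun _ => 1) ω
      = ∫ g, eChar ((inner ℝ (SOd.act ω x) (IsomRd.v g)) : ℝ) ∂μ := fun ω => by
    simp only [Tav, piRep, mul_one]
  -- the key pointwise estimate
  have key : ∀ ω : SOd d, ‖(∫ g, eChar ((inner ℝ (SOd.act ω x) (IsomRd.v g)) : ℝ) ∂μ) - 1‖ ≤ B := by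
    intro ω
    set y : IsomRd d → ℝ := fun g => (inner ℝ (SOd.act ω x) (IsomRd.v g) : ℝ) with hy
    have hy_cont : Continuous y := continuous_const.inner continuous_v
    have hy_int : Integrable y μ := hv_int.const_inner _
    have hy_mean : ∫ g, y g ∂μ = 0 := by
      simp only [hy]
      rw [integral_inner hv_int, hmean, inner_zero_right]
    have hy_bound : ∀ g, (2 * Real.pi * y g) ^ 2
        ≤ (4 * Real.pi ^ 2 * ‖x‖ ^ 2) * ‖IsomRd.v g‖ ^ 2 := by
      intro g
      have h1 : |y g| ≤ ‖x‖ * ‖IsomRd.v g‖ := by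
        calc |y g| ≤ ‖SOd.act ω x‖ * ‖IsomRd.v g‖ := abs_real_inner_le_norm _ _
          _ = ‖x‖ * ‖IsomRd.v g‖ := by rw [SOd.norm_act']
      have h2 : (y g) ^ 2 ≤ (‖x‖ * ‖IsomRd.v g‖) ^ 2 := by
        rw [← sq_abs]
        exact pow_le_pow_left₀ (abs_nonneg _) h1 2
      nlinarith [Real.pi_pos]
    have hecont : Continuous fun g : IsomRd d => eChar (y g) := continuous_eChar.comp hy_cont
    have hint1 : Integrable (fun g => eChar (y g)) μ :=
      Integrable.mono' (integrable_const 1) hecont.aestronglyMeasurable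
        (ae_of_all _ fun g => le_of_eq (norm_eChar _))
    have hint3 : Integrable (fun g => ((2 * Real.pi * y g : ℝ) : ℂ) * Complex.I) μ :=
      ((hy_int.const_mul (2 * Real.pi)).ofReal.mul_const Complex.I)
    have hsub : Integrable (fun g => eChar (y g) - 1) μ := hint1.sub (integrable_const 1)
    have hint2 : Integrable
        (fun g => eChar (y g) - 1 + ((2 * Real.pi * y g : ℝ) : ℂ) * Complex.I) μ :=
      hsub.add hint3
    have hzero : ∫ g, ((2 * Real.pi * y g : ℝ) : ℂ) * Complex.I ∂μ = 0 := by
      have hrs : (fun g => ((2 * Real.pi * y g : ℝ) : ℂ) * Complex.I)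
          = fun g => (2 * Real.pi * y g) • Complex.I := by
        funext g; rw [Complex.real_smul]
      rw [hrs, integral_smul_const, integral_const_mul, hy_mean]
      simp
    have heq : (∫ g, eChar (y g) ∂μ) - 1
        = ∫ g, (eChar (y g) - 1 + ((2 * Real.pi * y g : ℝ) : ℂ) * Complex.I) ∂μ := by
      rw [integral_add hsub hint3,
        integral_sub hint1 (integrable_const 1), hzero, add_zero, integral_const]
      simp [measure_univ]
    rw [heq]
    have hbd_int : Integrable (fun g => (4 * Real.pi ^ 2 * ‖x‖ ^ 2) * ‖IsomRd.v g‖ ^ 2) μ :=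
      hC.const_mul _
    calc ‖∫ g, (eChar (y g) - 1 + ((2 * Real.pi * y g : ℝ) : ℂ) * Complex.I) ∂μ‖
        ≤ ∫ g, ‖eChar (y g) - 1 + ((2 * Real.pi * y g : ℝ) : ℂ) * Complex.I‖ ∂μ :=
          norm_integral_le_integral_norm _
      _ ≤ ∫ g, (4 * Real.pi ^ 2 * ‖x‖ ^ 2) * ‖IsomRd.v g‖ ^ 2 ∂μ :=
          integral_mono hint2.norm hbd_int
            (fun g => (norm_eChar_sub_one_add_le (y g)).trans (hy_bound g))
      _ = B := by rw [integral_const_mul, hBdef]; ring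
  have key' : ∀ ω : SOd d, ‖Tav μ x (fun _ => 1) ω - 1‖ ≤ B := fun ω => by
    rw [hTav1 ω]; exact key ω
  -- first estimate
  have part1 : eLpNorm (fun ω => Tav μ x (fun _ => 1) ω - 1) 2 mSO ≤ ENNReal.ofReal B := by
    have h := eLpNorm_le_of_ae_bound (p := 2) (μ := mSO)
      (f := fun ω => Tav μ x (fun _ => 1) ω - 1) (C := B)
      (ae_of_all _ fun ω => key' ω)
    simpa [measure_univ] using h
  refine ⟨part1, ?_⟩
  -- second estimate
  have hF_sm : StronglyMeasurable (Tav μ x (fun _ => 1)) := by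
    have hk : StronglyMeasurable
        (fun p : SOd d × IsomRd d => piRep x p.2 (fun _ => (1 : ℂ)) p.1) := by
      apply Continuous.stronglyMeasurable
      unfold piRep
      exact (continuous_eChar.comp
        (((continuous_act_const x).comp continuous_fst).inner
          (continuous_v.comp continuous_snd))).mul continuous_const
    exact hk.integral_prod_right'
  have key2 : ∀ ω : SOd d, ‖Tav μ x (Tav μ x (fun _ => 1)) ω - 1‖ ≤ 2 * B := by
    intro ω
    set F : SOd d → ℂ := Tav μ x (fun _ => 1) with hF
    set y : IsomRd d → ℝ := fun g => (inner ℝ (SOd.act ω x) (IsomRd.v g) : ℝ) with hy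
    have hy_cont : Continuous y := continuous_const.inner continuous_v
    have hecont : Continuous fun g : IsomRd d => eChar (y g) := continuous_eChar.comp hy_cont
    have hint1 : Integrable (fun g => eChar (y g)) μ :=
      Integrable.mono' (integrable_const 1) hecont.aestronglyMeasurable
        (ae_of_all _ fun g => le_of_eq (norm_eChar _))
    have hFkey : ∀ σ : SOd d, ‖F σ - 1‖ ≤ B := fun σ => key' σ
    have hcomp_m : Measurable (fun g : IsomRd d => (IsomRd.rot g)⁻¹ * ω) :=
      ((continuous_mul_const_SOd ω).comp (continuous_inv_SOd.comp continuous_rot)).measurable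
    have hFcomp : AEStronglyMeasurable (fun g => F ((IsomRd.rot g)⁻¹ * ω)) μ :=
      (hF_sm.comp_measurable hcomp_m).aestronglyMeasurable
    have hint4 : Integrable (fun g => eChar (y g) * (F ((IsomRd.rot g)⁻¹ * ω) - 1)) μ := by
      refine Integrable.mono' (integrable_const B)
        (hecont.aestronglyMeasurable.mul (hFcomp.sub aestronglyMeasurable_const))
        (ae_of_all _ fun g => ?_)
      rw [norm_mul, norm_eChar, one_mul]
      exact hFkey _
    have hT2 : Tav μ x F ω = ∫ g, eChar (y g) * F ((IsomRd.rot g)⁻¹ * ω) ∂μ := by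
      simp only [Tav, piRep, hy]
    have hsplit : (fun g => eChar (y g) * F ((IsomRd.rot g)⁻¹ * ω))
        = fun g => eChar (y g) * (F ((IsomRd.rot g)⁻¹ * ω) - 1) + eChar (y g) := by
      funext g; ring
    have heq2 : Tav μ x F ω - 1
        = (∫ g, eChar (y g) * (F ((IsomRd.rot g)⁻¹ * ω) - 1) ∂μ)
          + ((∫ g, eChar (y g) ∂μ) - 1) := by
      rw [hT2, hsplit, integral_add hint4 hint1]; ring
    have hterm1 : ‖∫ g, eChar (y g) * (F ((IsomRd.rot g)⁻¹ * ω) - 1) ∂μ‖ ≤ B := by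
      calc ‖∫ g, eChar (y g) * (F ((IsomRd.rot g)⁻¹ * ω) - 1) ∂μ‖
          ≤ ∫ g, ‖eChar (y g) * (F ((IsomRd.rot g)⁻¹ * ω) - 1)‖ ∂μ :=
            norm_integral_le_integral_norm _
        _ ≤ ∫ _g, B ∂μ := integral_mono hint4.norm (integrable_const B)
            (fun g => by rw [norm_mul, norm_eChar, one_mul]; exact hFkey _)
        _ = B := by simp [measure_univ]
    calc ‖Tav μ x F ω - 1‖
        ≤ ‖∫ g, eChar (y g) * (F ((IsomRd.rot g)⁻¹ * ω) - 1) ∂μ‖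
          + ‖(∫ g, eChar (y g) ∂μ) - 1‖ := by rw [heq2]; exact norm_add_le _ _
      _ ≤ B + B := add_le_add hterm1 (key ω)
      _ = 2 * B := by ring
  have h2 : (8 : ℝ) * Real.pi ^ 2 * C * ‖x‖ ^ 2 = 2 * B := by rw [hBdef]; ring
  rw [h2]
  have h := eLpNorm_le_of_ae_bound (p := 2) (μ := mSO)
    (f := fun ω => Tav μ x (Tav μ x (fun _ => 1)) ω - 1) (C := 2 * B)
    (ae_of_all _ key2)
  simpa [measure_univ] using h
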